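/- Fix angles θ, t with |θ − t| < π/2, and L > 0, R > 0. For λ ≥ √(2L·tan²(θ−t)·cos(θ−t)/R) (so all square roots below are defined), let d̄_λ = λ²R·cos(θ−t)·√(1 + 2L·cos(θ−t)/(λ²R)) − λ²R·√(1 − sin²(θ−t)·(1 + 2L·cos(θ−t)/(λ²R))) − L. Then λ²·d̄_λ converges, as λ → ∞, to −(L²/2)·cos(2(θ−t))/(R·cos(θ−t)). -/

import Mathlib

open Real Filter

set_option maxHeartbeats 1000000 in
/-- the rescaled approximate defect `λ²·d̄_λ` in a fixed direction converges,
as λ → ∞, to `−(L²/2)·cos(2(θ−t))/(R·cos(θ−t))`. -/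
theorem stmt4 (θ t L R : ℝ) (hθt : |θ - t| < π / 2) (hL : 0 < L) (hR : 0 < R) :
    Tendsto (fun lam : ℝ => lam ^ 2 *
        (lam ^ 2 * R * Real.cos (θ - t) *
            Real.sqrt (1 + 2 * L * Real.cos (θ - t) / (lam ^ 2 * R))
          - lam ^ 2 * R *
            Real.sqrt (1 - Real.sin (θ - t) ^ 2 *
              (1 + 2 * L * Real.cos (θ - t) / (lam ^ 2 * R)))
          - L))
      atTop
      (nhds (-(L ^ 2 / 2) * Real.cos (2 * (θ - t)) / (R * Real.cos (θ - t)))) := by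
  obtain ⟨h1, h2⟩ := abs_lt.mp hθt
  set c := Real.cos (θ - t) with hcdef
  set s := Real.sin (θ - t) with hsdef
  have hc : 0 < c := Real.cos_pos_of_mem_Ioo ⟨by linarith, h2⟩
  have hsc : s ^ 2 + c ^ 2 = 1 := Real.sin_sq_add_cos_sq _
  have hs1 : s ^ 2 ≤ 1 := by nlinarith
  have hcos2 : Real.cos (2 * (θ - t)) = c ^ 2 - s ^ 2 := by
    rw [Real.cos_two_mul']
  have hx0 : Tendsto (fun lam : ℝ => 1 / (lam ^ 2 * R)) atTop (nhds 0) := by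
    simp only [one_div]
    exact ((tendsto_pow_atTop two_ne_zero).atTop_mul_const hR).inv_tendsto_atTop
  set A : ℝ → ℝ := fun lam => c * Real.sqrt (1 + 2 * L * c * (1 / (lam ^ 2 * R))) with hAdef
  set B : ℝ → ℝ := fun lam => Real.sqrt (c ^ 2 - 2 * L * c * s ^ 2 * (1 / (lam ^ 2 * R))) with hBdef
  have hA : Tendsto A atTop (nhds c) := by
    have h0 := Tendsto.const_add (1 : ℝ) (hx0.const_mul (2 * L * c))
    rw [mul_zero, add_zero] at h0
    have h' := h0.sqrt
    rw [Real.sqrt_one] at h'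
    have := h'.const_mul c
    rw [mul_one] at this
    exact this
  have hB : Tendsto B atTop (nhds c) := by
    have h0 := Tendsto.const_sub (c ^ 2) (hx0.const_mul (2 * L * c * s ^ 2))
    rw [mul_zero, sub_zero] at h0
    have h' := h0.sqrt
    rwa [Real.sqrt_sq hc.le] at h'
  have hcc : (0:ℝ) < c + c := by linarith
  have hG : Tendsto (fun lam => 2 * L ^ 2 * c * (s ^ 2 / (c + B lam) - c ^ 2 / (c + A lam)) / (R * (A lam + B lam)))
      atTop (nhds (-(L ^ 2 / 2) * Real.cos (2 * (θ - t)) / (R * c))) := by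
    have hnum : Tendsto (fun lam => 2 * L ^ 2 * c * (s ^ 2 / (c + B lam) - c ^ 2 / (c + A lam)))
        atTop (nhds (2 * L ^ 2 * c * (s ^ 2 / (c + c) - c ^ 2 / (c + c)))) :=
      tendsto_const_nhds.mul (((tendsto_const_nhds.div (tendsto_const_nhds.add hB) hcc.ne').sub
        (tendsto_const_nhds.div (tendsto_const_nhds.add hA) hcc.ne')))
    have hden : Tendsto (fun lam => R * (A lam + B lam)) atTop (nhds (R * (c + c))) :=
      tendsto_const_nhds.mul (hA.add hB)
    have := hnum.div hden (mul_pos hR hcc).ne'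
    convert this using 1
    · rfl
    rw [hcos2]
    field_simp
    ring
  refine hG.congr' ?_
  have hM : ∀ᶠ lam : ℝ in atTop, Real.sqrt (4 * L / (c * R)) + 1 ≤ lam := eventually_ge_atTop _
  filter_upwards [hM] with lam hlam
  have hlam1 : (1 : ℝ) ≤ lam := le_trans (by linarith [Real.sqrt_nonneg (4 * L / (c * R))]) hlam
  have hlam0 : 0 < lam := by linarith
  have hlamsq : 4 * L / (c * R) ≤ lam ^ 2 := by
    have h0 : Real.sqrt (4 * L / (c * R)) ≤ lam := le_trans (by linarith) hlam
    calc 4 * L / (c * R) = Real.sqrt (4 * L / (c * R)) ^ 2 :=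
          (Real.sq_sqrt (le_of_lt (div_pos (by linarith) (mul_pos hc hR)))).symm
    _ ≤ lam ^ 2 := by nlinarith [Real.sqrt_nonneg (4 * L / (c * R))]
  simp only [hAdef, hBdef]
  rw [show (1 : ℝ) + 2 * L * c / (lam ^ 2 * R) = 1 + 2 * L * c * (1 / (lam ^ 2 * R)) by ring,
    show (1 : ℝ) - s ^ 2 * (1 + 2 * L * c * (1 / (lam ^ 2 * R))) = c ^ 2 - 2 * L * c * s ^ 2 * (1 / (lam ^ 2 * R)) by
      linear_combination (-1 : ℝ) * hsc]
  set x : ℝ := 1 / (lam ^ 2 * R) with hxdef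
  have hxpos : 0 < x := one_div_pos.mpr (mul_pos (pow_pos hlam0 2) hR)
  have h4 : 4 * L ≤ lam ^ 2 * (c * R) := by
    rw [div_le_iff₀ (mul_pos hc hR)] at hlamsq; linarith
  have hxle : 2 * L * c * x ≤ c ^ 2 / 2 := by
    rw [hxdef, mul_one_div, div_le_div_iff₀ (mul_pos (pow_pos hlam0 2) hR) two_pos]
    nlinarith [mul_le_mul_of_nonneg_left h4 hc.le]
  have h2lcx : 0 ≤ 2 * L * c * x := by nlinarith [mul_pos (mul_pos hL hc) hxpos]
  have hxlam : x * (lam ^ 2 * R) = 1 := by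
    rw [hxdef]; field_simp
  have hu : 0 < 1 + 2 * L * c * x := by linarith
  have hv : 0 < c ^ 2 - 2 * L * c * s ^ 2 * x := by
    nlinarith [mul_nonneg h2lcx (by linarith : (0:ℝ) ≤ 1 - s ^ 2)]
  set a := Real.sqrt (1 + 2 * L * c * x) with hadef
  set b := Real.sqrt (c ^ 2 - 2 * L * c * s ^ 2 * x) with hbdef
  have ha2 : a ^ 2 = 1 + 2 * L * c * x := Real.sq_sqrt hu.le
  have hb2 : b ^ 2 = c ^ 2 - 2 * L * c * s ^ 2 * x := Real.sq_sqrt hv.le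
  have ha0 : 0 < a := Real.sqrt_pos.mpr hu
  have hb0 : 0 < b := Real.sqrt_pos.mpr hv
  have hD1 : (0:ℝ) < c + b := by linarith
  have hca : (0:ℝ) < c * a := mul_pos hc ha0
  have hD2 : (0:ℝ) < c + c * a := by linarith
  have hS : (0:ℝ) < c * a + b := by linarith
  have hprod : (c * a - b) * (c * a + b) = 2 * L * c * x := by
    linear_combination c ^ 2 * ha2 - hb2 + 2 * L * c * x * hsc
  have hkey0 : (2 * c - (c * a + b)) * ((c + b) * (c + c * a))
      = 2 * L * c * x * (s ^ 2 * (c + c * a) - c ^ 2 * (c + b)) := by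
    linear_combination (-(c ^ 2) * (c + b)) * ha2 - (c + c * a) * hb2
  have hmain : (c * a - b - L * x) * ((c + b) * (c + c * a) * (c * a + b))
      = 2 * L ^ 2 * c * x ^ 2 * (s ^ 2 * (c + c * a) - c ^ 2 * (c + b)) := by
    linear_combination ((c + b) * (c + c * a)) * hprod + (L * x) * hkey0
  have hlam2 : lam ^ 2 = 1 / (R * x) := by
    rw [hxdef]; field_simp
  clear_value x a b
  rw [hlam2]
  field_simp
  apply mul_left_cancel₀ hc.ne'
  linear_combination (-1 : ℝ) * hmain
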